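/- Let G be a finite group acting on a finite set Ω with no regular orbit, i.e. every ω ∈ Ω is fixed by some nonidentity element of G. Let P be a set of representatives of the conjugacy classes of elements of prime order in G. Then, as an inequality of rational numbers, |Ω| ≤ Σ_{x ∈ P} (1/(o(x) − 1)) · |x^G| · |Fix(x)|, where o(x) denotes the order of x, x^G its conjugacy class, and Fix(x) its fixed-point set in Ω. -/
import Mathlib

open Finset
open scoped Classical

private lemma fixCardConj {G : Type*} [Group G] {Ω : Type*} [MulAction G Ω]
    {x g : G} (h : IsConj x g) :
    Nat.card {ω : Ω // g • ω = ω} = Nat.card {ω : Ω // x • ω = ω} := by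
  obtain ⟨c, hc⟩ := isConj_iff.mp h
  have hc' : c * x = g * c := by rw [← hc]; group
  have hc'' : x * c⁻¹ = c⁻¹ * g := by rw [← hc]; group
  refine Nat.card_congr (Equiv.symm ?_)
  refine ⟨fun ω => ⟨c • ω.1, ?_⟩, fun ω => ⟨c⁻¹ • ω.1, ?_⟩, ?_, ?_⟩
  · rw [← mul_smul, ← hc', mul_smul, ω.2]
  · rw [← mul_smul, hc'', mul_smul, ω.2]
  · intro ω; ext; simp
  · intro ω; ext; simp

private lemma inner_ge_one {G : Type*} [Group G] [Fintype G] {Ω : Type*} [Fintype Ω]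
    [MulAction G Ω] (ω : Ω) (g : G) (hg1 : g ≠ 1) (hgω : g • ω = ω) :
    (1 : ℚ) ≤ ∑ x ∈ univ.filter (fun x : G => (orderOf x).Prime ∧ x • ω = ω),
      1 / ((orderOf x : ℚ) - 1) := by
  set m := orderOf g with hm
  have hm1 : m ≠ 1 := by simpa [hm] using hg1
  have hm0 : m ≠ 0 := (orderOf_pos g).ne'
  set p := m.minFac with hp
  have hpp : p.Prime := Nat.minFac_prime hm1
  have hpd : p ∣ m := Nat.minFac_dvd m
  set h := g ^ (m / p) with hh
  have hoh : orderOf h = p := by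
    rw [hh, orderOf_pow, ← hm, Nat.gcd_eq_right (Nat.div_dvd_of_dvd hpd),
      Nat.div_div_self hpd hm0]
  have hgfix : ∀ k : ℕ, g ^ k • ω = ω := by
    intro k
    induction k with
    | zero => simp
    | succ n ih => rw [pow_succ, mul_smul, hgω, ih]
  have hhfix : ∀ k : ℕ, h ^ k • ω = ω := by
    intro k; rw [hh, ← pow_mul]; exact hgfix _
  have hord : ∀ k ∈ Finset.Ioo 0 p, orderOf (h ^ k) = p := by
    intro k hk
    rw [mem_Ioo] at hk
    rw [orderOf_pow, hoh,
      Nat.Coprime.gcd_eq_one (hpp.coprime_iff_not_dvd.mpr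
        (Nat.not_dvd_of_pos_of_lt hk.1 hk.2)), Nat.div_one]
  have hsub : (Finset.Ioo 0 p).image (h ^ ·) ⊆
      univ.filter (fun x : G => (orderOf x).Prime ∧ x • ω = ω) := by
    intro y hy
    simp only [mem_image] at hy
    obtain ⟨k, hk, rfl⟩ := hy
    simp only [mem_filter, mem_univ, true_and]
    exact ⟨(hord k hk) ▸ hpp, hhfix k⟩
  have hinj : Set.InjOn (h ^ ·) (Finset.Ioo 0 p : Finset ℕ) := by
    intro a ha b hb hab
    rw [coe_Ioo, Set.mem_Ioo] at ha hb
    exact pow_injOn_Iio_orderOf (by simpa [hoh] using ha.2) (by simpa [hoh] using hb.2) hab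
  have hsum : ∑ x ∈ (Finset.Ioo 0 p).image (h ^ ·), 1 / ((orderOf x : ℚ) - 1) = 1 := by
    rw [Finset.sum_image (fun a ha b hb => hinj ha hb)]
    have : ∀ k ∈ Finset.Ioo 0 p, 1 / ((orderOf (h ^ k) : ℚ) - 1) = 1 / ((p : ℚ) - 1) := by
      intro k hk; rw [hord k hk]
    rw [Finset.sum_congr rfl this, Finset.sum_const, Nat.card_Ioo, nsmul_eq_mul,
      Nat.sub_zero]
    have hp2 : (2 : ℕ) ≤ p := hpp.two_le
    have h1 : ((p - 1 : ℕ) : ℚ) = (p : ℚ) - 1 := by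
      push_cast [Nat.cast_sub (by omega : 1 ≤ p)]; ring
    rw [h1]
    have : (p : ℚ) - 1 ≠ 0 := by
      have : (2 : ℚ) ≤ (p : ℚ) := by exact_mod_cast hp2
      linarith
    field_simp
  calc (1 : ℚ) = ∑ x ∈ (Finset.Ioo 0 p).image (h ^ ·), 1 / ((orderOf x : ℚ) - 1) :=
        hsum.symm
    _ ≤ _ := by
        refine Finset.sum_le_sum_of_subset_of_nonneg hsub ?_
        intro x hx _
        rw [mem_filter] at hx
        have h2 : (2 : ℕ) ≤ orderOf x := hx.2.1.two_le
        have : (1 : ℚ) ≤ (orderOf x : ℚ) - 1 := by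
          have : (2 : ℚ) ≤ (orderOf x : ℚ) := by exact_mod_cast h2
          linarith
        positivity

/-- If a finite group `G` acts on a finite set `Ω` with no regular orbit, and `P` is a
set of representatives of the conjugacy classes of elements of prime order of `G`, then
`|Ω| ≤ ∑_{x ∈ P} (1/(o(x)-1)) * |x^G| * |Fix(x)|` as rational numbers. -/
theorem stmt_4 (G : Type*) [Group G] [Fintype G] (Ω : Type*) [Fintype Ω]
    [MulAction G Ω]
    (hnoreg : ∀ ω : Ω, ∃ g : G, g ≠ 1 ∧ g • ω = ω)
    (P : Finset G)
    (hP1 : ∀ x ∈ P, (orderOf x).Prime)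
    (hP2 : ∀ x ∈ P, ∀ y ∈ P, IsConj x y → x = y)
    (hP3 : ∀ g : G, (orderOf g).Prime → ∃ x ∈ P, IsConj x g) :
    (Fintype.card Ω : ℚ) ≤
      ∑ x ∈ P, (1 / ((orderOf x : ℚ) - 1)) *
        (Nat.card {h : G // IsConj x h}) * (Nat.card {ω : Ω // x • ω = ω}) := by
  classical
  set Q : Finset G := univ.filter (fun g : G => (orderOf g).Prime) with hQ
  -- Step A
  have stepA : (Fintype.card Ω : ℚ) ≤
      ∑ g ∈ Q, 1 / ((orderOf g : ℚ) - 1) * (Nat.card {ω : Ω // g • ω = ω}) := by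
    have key : ∀ ω : Ω, (1 : ℚ) ≤
        ∑ g ∈ Q.filter (fun g => g • ω = ω), 1 / ((orderOf g : ℚ) - 1) := by
      intro ω
      obtain ⟨g, hg1, hgω⟩ := hnoreg ω
      have := inner_ge_one ω g hg1 hgω
      rwa [hQ, Finset.filter_filter]
    calc (Fintype.card Ω : ℚ) = ∑ _ω : Ω, (1 : ℚ) := by simp
      _ ≤ ∑ ω : Ω, ∑ g ∈ Q.filter (fun g => g • ω = ω), 1 / ((orderOf g : ℚ) - 1) :=
          Finset.sum_le_sum (fun ω _ => key ω)
      _ = ∑ ω : Ω, ∑ g ∈ Q, if g • ω = ω then 1 / ((orderOf g : ℚ) - 1) else 0 := by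
          simp [Finset.sum_filter]
      _ = ∑ g ∈ Q, ∑ ω : Ω, if g • ω = ω then 1 / ((orderOf g : ℚ) - 1) else 0 :=
          Finset.sum_comm
      _ = ∑ g ∈ Q, 1 / ((orderOf g : ℚ) - 1) * (Nat.card {ω : Ω // g • ω = ω}) := by
          refine Finset.sum_congr rfl fun g _ => ?_
          rw [← Finset.sum_filter, Finset.sum_const, Nat.card_eq_fintype_card,
            Fintype.card_subtype, nsmul_eq_mul, mul_comm]
  -- Step B : group Q by conjugacy classes
  have hQeq : Q = P.biUnion (fun x => univ.filter (fun h => IsConj x h)) := by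
    ext g
    simp only [hQ, mem_filter, mem_univ, true_and, mem_biUnion]
    constructor
    · intro hg
      obtain ⟨x, hx, hconj⟩ := hP3 g hg
      exact ⟨x, hx, hconj⟩
    · rintro ⟨x, hx, hconj⟩
      obtain ⟨c, hc⟩ := hconj
      exact (SemiconjBy.orderOf_eq _ hc) ▸ hP1 x hx
  have hdisj : ∀ x ∈ P, ∀ y ∈ P, x ≠ y →
      Disjoint (univ.filter (fun h => IsConj x h)) (univ.filter (fun h => IsConj y h)) := by
    intro x hx y hy hxy
    rw [Finset.disjoint_left]
    intro g hgx hgy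
    simp only [mem_filter, mem_univ, true_and] at hgx hgy
    exact hxy (hP2 x hx y hy (hgx.trans hgy.symm))
  have stepB : ∑ g ∈ Q, 1 / ((orderOf g : ℚ) - 1) * (Nat.card {ω : Ω // g • ω = ω}) =
      ∑ x ∈ P, (1 / ((orderOf x : ℚ) - 1)) *
        (Nat.card {h : G // IsConj x h}) * (Nat.card {ω : Ω // x • ω = ω}) := by
    rw [hQeq, Finset.sum_biUnion hdisj]
    refine Finset.sum_congr rfl fun x hx => ?_
    have hcongr : ∀ g ∈ univ.filter (fun h => IsConj x h),
        1 / ((orderOf g : ℚ) - 1) * (Nat.card {ω : Ω // g • ω = ω}) =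
        1 / ((orderOf x : ℚ) - 1) * (Nat.card {ω : Ω // x • ω = ω}) := by
      intro g hg
      simp only [mem_filter, mem_univ, true_and] at hg
      obtain ⟨c, hc⟩ := hg
      rw [← SemiconjBy.orderOf_eq _ hc, fixCardConj ⟨c, hc⟩]
    rw [Finset.sum_congr rfl hcongr, Finset.sum_const, nsmul_eq_mul]
    have hcard : (univ.filter (fun h => IsConj x h)).card = Nat.card {h : G // IsConj x h} := by
      rw [Nat.card_eq_fintype_card, Fintype.card_subtype]
    rw [hcard]; ring
  linarith [stepA, stepB.le, stepB.ge]
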